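/- Let g : [a,b] → E be a right regulated mapping on a compact real interval with values in a Banach space E, i.e., g has a right limit at every point of [a,b). Then for every ε > 0 there exists a subset Λ of [a,b], well-ordered by <, with min Λ = a and max Λ = b, such that [a,b) is the disjoint union of the intervals [β, S(β)) for β ∈ Λ \ {b} (S the successor in Λ), and ‖g(s) − g(t)‖ ≤ ε whenever s, t ∈ (β, S(β)) for some β ∈ Λ \ {b}. -/

import Mathlib

open Set Filter Ordinal

namespace RRSD

variable {E : Type*} [NormedAddCommGroup E]

/-- Set of "good" right endpoints. -/
def goodSet (g : ℝ → E) (ε b x : ℝ) : Set ℝ :=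
  {y | y ∈ Set.Ioc x b ∧ ∀ s ∈ Set.Ioo x y, ∀ t ∈ Set.Ioo x y, ‖g s - g t‖ ≤ ε}

noncomputable def hnext (g : ℝ → E) (ε b x : ℝ) : ℝ := sSup (goodSet g ε b x)

variable {g : ℝ → E} {ε a b : ℝ}

lemma goodSet_nonempty (hε : 0 < ε) {x : ℝ} (hx : x ∈ Set.Ico a b)
    (hL : ∃ L : E, Filter.Tendsto g (nhdsWithin x (Set.Ioi x)) (nhds L)) :
    (goodSet g ε b x).Nonempty := by
  obtain ⟨L, hL⟩ := hL
  rw [Metric.tendsto_nhdsWithin_nhds] at hL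
  obtain ⟨δ, hδ, hcl⟩ := hL (ε / 2) (by linarith)
  refine ⟨min (x + δ) b, ⟨⟨lt_min (by linarith) hx.2, min_le_right _ _⟩, ?_⟩⟩
  intro s hs t ht
  have hgs : dist (g s) L < ε / 2 := by
    refine hcl hs.1 ?_
    have : s < x + δ := lt_of_lt_of_le hs.2 (min_le_left _ _)
    rw [Real.dist_eq, abs_of_pos (by linarith [hs.1] : (0:ℝ) < s - x)]
    linarith
  have hgt : dist (g t) L < ε / 2 := by
    refine hcl ht.1 ?_
    have : t < x + δ := lt_of_lt_of_le ht.2 (min_le_left _ _)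
    rw [Real.dist_eq, abs_of_pos (by linarith [ht.1] : (0:ℝ) < t - x)]
    linarith
  calc ‖g s - g t‖ = dist (g s) (g t) := (dist_eq_norm _ _).symm
    _ ≤ dist (g s) L + dist L (g t) := dist_triangle _ _ _
    _ = dist (g s) L + dist (g t) L := by rw [dist_comm L]
    _ ≤ ε := by linarith

lemma goodSet_bddAbove (x : ℝ) : BddAbove (goodSet g ε b x) :=
  ⟨b, fun _ hy => hy.1.2⟩

lemma hnext_mem (hε : 0 < ε) {x : ℝ} (hx : x ∈ Set.Ico a b)
    (hL : ∃ L : E, Filter.Tendsto g (nhdsWithin x (Set.Ioi x)) (nhds L)) :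
    hnext g ε b x ∈ Set.Ioc x b := by
  obtain ⟨y, hy⟩ := goodSet_nonempty hε hx hL
  constructor
  · exact lt_of_lt_of_le hy.1.1 (le_csSup (goodSet_bddAbove x) hy)
  · exact csSup_le ⟨y, hy⟩ fun z hz => hz.1.2

lemma hnext_osc (hε : 0 < ε) {x : ℝ} (hx : x ∈ Set.Ico a b)
    (hL : ∃ L : E, Filter.Tendsto g (nhdsWithin x (Set.Ioi x)) (nhds L)) :
    ∀ s ∈ Set.Ioo x (hnext g ε b x), ∀ t ∈ Set.Ioo x (hnext g ε b x),
      ‖g s - g t‖ ≤ ε := by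
  intro s hs t ht
  have hne := goodSet_nonempty (a := a) hε hx hL
  have hlt : max s t < hnext g ε b x := max_lt hs.2 ht.2
  obtain ⟨y, hy, hy'⟩ := exists_lt_of_lt_csSup hne hlt
  exact hy.2 s ⟨hs.1, lt_of_le_of_lt (le_max_left _ _) hy'⟩
    t ⟨ht.1, lt_of_le_of_lt (le_max_right _ _) hy'⟩

/-- Transfinite iteration of `hnext` starting from `a`, capped at `b`. -/
noncomputable def phi (g : ℝ → E) (ε a b : ℝ) : Ordinal → ℝ := fun o =>
  Ordinal.limitRecOn o a (fun _ ih => if ih < b then hnext g ε b ih else b)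
    (fun o _ ih => sSup (Set.range fun p : Set.Iio o => ih p.1 p.2))

lemma phi_zero : phi g ε a b 0 = a := Ordinal.limitRecOn_zero _ _ _

lemma phi_succ (o : Ordinal) :
    phi g ε a b (Order.succ o)
      = if phi g ε a b o < b then hnext g ε b (phi g ε a b o) else b :=
  Ordinal.limitRecOn_succ _ _ _ _

lemma phi_limit {o : Ordinal} (h : Order.IsSuccLimit o) :
    phi g ε a b o = sSup (Set.range fun p : Set.Iio o => phi g ε a b p.1) :=
  Ordinal.limitRecOn_limit _ _ _ _ h


variable {g : ℝ → E} {ε a b : ℝ}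

lemma phi_invariant (hab : a ≤ b)
    (hg : ∀ x ∈ Set.Ico a b, ∃ L : E,
      Filter.Tendsto g (nhdsWithin x (Set.Ioi x)) (nhds L)) (hε : 0 < ε) :
    ∀ o : Ordinal, phi g ε a b o ∈ Set.Icc a b ∧
      ∀ p < o, phi g ε a b p ≤ phi g ε a b o := by
  intro o
  induction o using Ordinal.induction with
  | h o IH =>
    rcases Ordinal.zero_or_succ_or_isSuccLimit o with h0 | ⟨p, hp⟩ | hlim
    · subst h0
      exact ⟨by rw [phi_zero]; exact ⟨le_refl a, hab⟩,
        fun p hp => absurd hp (not_lt_zero (a := p))⟩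
    · subst hp
      have IHp := IH p (Order.lt_succ p)
      have hmono : ∀ q ≤ p, phi g ε a b q ≤ phi g ε a b p := by
        intro q hq
        rcases eq_or_lt_of_le hq with rfl | hq
        · exact le_refl _
        · exact IHp.2 q hq
      by_cases hb : phi g ε a b p < b
      · have hmem := hnext_mem (g := g) hε ⟨IHp.1.1, hb⟩
          (hg _ ⟨IHp.1.1, hb⟩)
        rw [phi_succ, if_pos hb]
        refine ⟨⟨le_trans IHp.1.1 (le_of_lt hmem.1), hmem.2⟩, fun q hq => ?_⟩
        exact le_trans (hmono q (Order.lt_succ_iff.mp hq)) (le_of_lt hmem.1)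
      · rw [phi_succ, if_neg hb]
        exact ⟨⟨hab, le_refl b⟩, fun q hq =>
          (IH q hq).1.2⟩
    · have hne : (Set.range fun p : Set.Iio o => phi g ε a b p.1).Nonempty :=
        ⟨phi g ε a b 0, ⟨⟨0, hlim.pos⟩, rfl⟩⟩
      have hbdd : BddAbove (Set.range fun p : Set.Iio o => phi g ε a b p.1) := by
        refine ⟨b, ?_⟩
        rintro _ ⟨p, rfl⟩
        exact (IH p.1 p.2).1.2
      have hup : ∀ p < o, phi g ε a b p ≤ phi g ε a b o := by
        intro p hp
        rw [phi_limit hlim]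
        exact le_csSup hbdd ⟨⟨p, hp⟩, rfl⟩
      refine ⟨⟨?_, ?_⟩, hup⟩
      · have := hup 0 hlim.pos
        rwa [phi_zero] at this
      · rw [phi_limit hlim]
        refine csSup_le hne ?_
        rintro _ ⟨p, rfl⟩
        exact (IH p.1 p.2).1.2

lemma phi_mono (hab : a ≤ b)
    (hg : ∀ x ∈ Set.Ico a b, ∃ L : E,
      Filter.Tendsto g (nhdsWithin x (Set.Ioi x)) (nhds L)) (hε : 0 < ε)
    {p o : Ordinal} (h : p ≤ o) : phi g ε a b p ≤ phi g ε a b o := by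
  rcases eq_or_lt_of_le h with rfl | h
  · exact le_refl _
  · exact (phi_invariant hab hg hε o).2 p h

lemma phi_hits (hab : a < b)
    (hg : ∀ x ∈ Set.Ico a b, ∃ L : E,
      Filter.Tendsto g (nhdsWithin x (Set.Ioi x)) (nhds L)) (hε : 0 < ε) :
    ∃ o : Ordinal.{0}, phi g ε a b o = b := by
  by_contra h
  push_neg at h
  have hlt : ∀ o : Ordinal.{0}, phi g ε a b o < b := fun o =>
    lt_of_le_of_ne (phi_invariant hab.le hg hε o).1.2 (h o)
  have hsm : StrictMono (fun o : Ordinal.{0} => phi g ε a b o) := by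
    intro p o hpo
    have h1 : phi g ε a b p < phi g ε a b (Order.succ p) := by
      rw [phi_succ, if_pos (hlt p)]
      exact (hnext_mem (g := g) hε ⟨(phi_invariant hab.le hg hε p).1.1, hlt p⟩
        (hg _ ⟨(phi_invariant hab.le hg hε p).1.1, hlt p⟩)).1
    exact lt_of_lt_of_le h1 (phi_mono hab.le hg hε (Order.succ_le_of_lt hpo))
  exact not_injective_of_ordinal (phi g ε a b) hsm.injective

end RRSD

/-- For a right regulated mapping `g : [a,b] → E` and every `ε > 0` there is a
well-ordered subset `Λ` of `[a,b]` with `min Λ = a`, `max Λ = b`, such that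
`[a,b)` is the disjoint union of the intervals `[β, S β)`, `β ∈ Λ \ {b}`, and the
oscillation of `g` on each open interval `(β, S β)` is at most `ε`. -/
theorem right_regulated_step_decomposition {E : Type*} [NormedAddCommGroup E]
    [NormedSpace ℝ E] [CompleteSpace E] (a b : ℝ) (hab : a < b) (g : ℝ → E)
    (hg : ∀ x ∈ Set.Ico a b, ∃ L : E,
      Filter.Tendsto g (nhdsWithin x (Set.Ioi x)) (nhds L))
    (ε : ℝ) (hε : 0 < ε) :
    ∃ Λ : Set ℝ, Λ ⊆ Set.Icc a b ∧
      (∀ s : Set ℝ, s ⊆ Λ → s.Nonempty → ∃ m ∈ s, ∀ x ∈ s, m ≤ x) ∧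
      a ∈ Λ ∧ b ∈ Λ ∧ (∀ x ∈ Λ, a ≤ x) ∧ (∀ x ∈ Λ, x ≤ b) ∧
      ∃ S : ℝ → ℝ,
        (∀ β ∈ Λ \ {b}, S β ∈ Λ ∧ β < S β ∧ ∀ x ∈ Λ, β < x → S β ≤ x) ∧
        (Set.Ico a b = ⋃ β ∈ Λ \ {b}, Set.Ico β (S β)) ∧
        Set.PairwiseDisjoint (Λ \ {b}) (fun β => Set.Ico β (S β)) ∧
        ∀ β ∈ Λ \ {b}, ∀ s ∈ Set.Ioo β (S β), ∀ t ∈ Set.Ioo β (S β),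
          ‖g s - g t‖ ≤ ε := by
  classical
  obtain ⟨o₀, ho₀⟩ := RRSD.phi_hits hab hg hε
  have inv : ∀ o : Ordinal.{0}, RRSD.phi g ε a b o ∈ Set.Icc a b ∧
      ∀ p < o, RRSD.phi g ε a b p ≤ RRSD.phi g ε a b o :=
    RRSD.phi_invariant hab.le hg hε
  have mono : ∀ {p o : Ordinal.{0}}, p ≤ o →
      RRSD.phi g ε a b p ≤ RRSD.phi g ε a b o :=
    fun h => RRSD.phi_mono hab.le hg hε h
  set θ : Ordinal.{0} := sInf {o : Ordinal.{0} | RRSD.phi g ε a b o = b} with hθdef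
  have hθ : RRSD.phi g ε a b θ = b := by
    have h : sInf {o : Ordinal.{0} | RRSD.phi g ε a b o = b} ∈
        {o : Ordinal.{0} | RRSD.phi g ε a b o = b} := csInf_mem ⟨o₀, ho₀⟩
    rw [hθdef]
    exact h
  refine ⟨RRSD.phi g ε a b '' Set.Iic θ, ?_, ?_, ?_, ?_, ?_, ?_, ?_⟩
  · rintro _ ⟨o, _, rfl⟩
    exact (inv o).1
  · -- well-ordered
    rintro s hs ⟨x, hx⟩
    obtain ⟨ox, hoxθ, hox⟩ := hs hx
    have hOne : {o : Ordinal.{0} | o ≤ θ ∧ RRSD.phi g ε a b o ∈ s}.Nonempty :=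
      ⟨ox, hoxθ, by rw [hox]; exact hx⟩
    set o₁ := sInf {o : Ordinal.{0} | o ≤ θ ∧ RRSD.phi g ε a b o ∈ s} with ho₁def
    have ho₁ := csInf_mem hOne
    refine ⟨RRSD.phi g ε a b o₁, ho₁.2, ?_⟩
    intro y hy
    obtain ⟨oy, hoyθ, hoy⟩ := hs hy
    have : o₁ ≤ oy := csInf_le' ⟨hoyθ, by rw [hoy]; exact hy⟩
    rw [← hoy]
    exact mono this
  · exact ⟨0, zero_le (a := θ), RRSD.phi_zero⟩
  · exact ⟨θ, le_refl θ, hθ⟩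
  · rintro _ ⟨o, _, rfl⟩; exact (inv o).1.1
  · rintro _ ⟨o, _, rfl⟩; exact (inv o).1.2
  · have hsucc : ∀ β ∈ (RRSD.phi g ε a b '' Set.Iic θ) \ {b},
        RRSD.hnext g ε b β ∈ RRSD.phi g ε a b '' Set.Iic θ ∧
        β < RRSD.hnext g ε b β ∧
        ∀ x ∈ RRSD.phi g ε a b '' Set.Iic θ, β < x → RRSD.hnext g ε b β ≤ x := by
      intro β hβ
      obtain ⟨hβΛ, hβne⟩ := hβ
      rw [Set.mem_singleton_iff] at hβne
      have hβb : β < b := lt_of_le_of_ne (by rcases hβΛ with ⟨o, _, rfl⟩; exact (inv o).1.2) hβne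
      have hβa : a ≤ β := by rcases hβΛ with ⟨o, _, rfl⟩; exact (inv o).1.1
      obtain ⟨o', ho'θ, ho'⟩ := hβΛ
      have hOne : {o : Ordinal.{0} | RRSD.phi g ε a b o = β}.Nonempty := ⟨o', ho'⟩
      set oβ := sInf {o : Ordinal.{0} | RRSD.phi g ε a b o = β} with hoβdef
      have hoβ : RRSD.phi g ε a b oβ = β := csInf_mem hOne
      have hoβle : oβ ≤ θ := le_trans (csInf_le' ho') ho'θ
      have hoβlt : oβ < θ := lt_of_le_of_ne hoβle (by
        intro h
        rw [h, hθ] at hoβ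
        exact hβne hoβ.symm)
      have key : RRSD.phi g ε a b (Order.succ oβ) = RRSD.hnext g ε b β := by
        rw [RRSD.phi_succ, hoβ, if_pos hβb]
      have hmem := RRSD.hnext_mem (g := g) hε ⟨hβa, hβb⟩ (hg β ⟨hβa, hβb⟩)
      refine ⟨⟨Order.succ oβ, Order.succ_le_of_lt hoβlt, key⟩, hmem.1, ?_⟩
      rintro _ ⟨o', ho'θ', rfl⟩ hlt
      have hoβo' : oβ < o' := by
        by_contra hcon
        push_neg at hcon
        have := mono hcon
        rw [hoβ] at this
        exact absurd hlt (not_lt_of_ge this)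
      rw [← key]
      exact mono (Order.succ_le_of_lt hoβo')
    refine ⟨RRSD.hnext g ε b, hsucc, ?_, ?_, ?_⟩
    · -- covering
      ext x
      simp only [Set.mem_iUnion, exists_prop]
      constructor
      · intro hx
        have hOne : {o : Ordinal.{0} | o ≤ θ ∧ x < RRSD.phi g ε a b o}.Nonempty :=
          ⟨θ, le_refl θ, by rw [hθ]; exact hx.2⟩
        set o₁ := sInf {o : Ordinal.{0} | o ≤ θ ∧ x < RRSD.phi g ε a b o} with ho₁def
        have ho₁ := csInf_mem hOne
        have ho₁m : o₁ ∈ {o : Ordinal.{0} | o ≤ θ ∧ x < RRSD.phi g ε a b o} := ho₁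
        have ho₁0 : o₁ ≠ 0 := by
          intro h
          have h2 : x < RRSD.phi g ε a b o₁ := ho₁m.2
          rw [h, RRSD.phi_zero] at h2
          exact absurd h2 (not_lt_of_ge hx.1)
        rcases Ordinal.zero_or_succ_or_isSuccLimit o₁ with h0 | ⟨p, hp⟩ | hlim
        · exact absurd h0 ho₁0
        · have hpθ : p ≤ θ := le_trans (le_of_lt (Order.lt_succ p)) (hp ▸ ho₁.1)
          have hpO : p ∉ {o : Ordinal.{0} | o ≤ θ ∧ x < RRSD.phi g ε a b o} := by
            intro hmem
            have := csInf_le' hmem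
            rw [← ho₁def] at this
            exact absurd (hp ▸ Order.lt_succ p) (not_lt_of_ge this)
          have hpx : RRSD.phi g ε a b p ≤ x := by
            by_contra hcon
            push_neg at hcon
            exact hpO ⟨hpθ, hcon⟩
          have hpb : RRSD.phi g ε a b p < b := lt_of_le_of_lt hpx hx.2
          have hpa : a ≤ RRSD.phi g ε a b p := (inv p).1.1
          have key : RRSD.phi g ε a b o₁ = RRSD.hnext g ε b (RRSD.phi g ε a b p) := by
            rw [← hp, RRSD.phi_succ, if_pos hpb]
          refine ⟨RRSD.phi g ε a b p, ⟨⟨p, hpθ, rfl⟩, ?_⟩, hpx, ?_⟩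
          · rw [Set.mem_singleton_iff]
            exact ne_of_lt hpb
          · rw [← key]
            exact ho₁.2
        · exfalso
          have hsup := RRSD.phi_limit (g := g) (ε := ε) (a := a) (b := b) hlim
          have hne : (Set.range fun p : Set.Iio o₁ => RRSD.phi g ε a b p.1).Nonempty :=
            ⟨RRSD.phi g ε a b 0, ⟨⟨0, hlim.pos⟩, rfl⟩⟩
          have : x < sSup (Set.range fun p : Set.Iio o₁ => RRSD.phi g ε a b p.1) := by
            rw [← hsup]; exact ho₁.2
          obtain ⟨_, ⟨⟨p, hpo₁⟩, rfl⟩, hpx⟩ := exists_lt_of_lt_csSup hne this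
          have hpmem : p ∈ {o : Ordinal.{0} | o ≤ θ ∧ x < RRSD.phi g ε a b o} :=
            ⟨le_trans (le_of_lt hpo₁) ho₁.1, hpx⟩
          have := csInf_le' hpmem
          rw [← ho₁def] at this
          exact absurd hpo₁ (not_lt_of_ge this)
      · rintro ⟨β, ⟨hβΛ, hβne⟩, hx1, hx2⟩
        rw [Set.mem_singleton_iff] at hβne
        have hβb : β < b := lt_of_le_of_ne (by rcases hβΛ with ⟨o, _, rfl⟩; exact (inv o).1.2) hβne
        have hβa : a ≤ β := by rcases hβΛ with ⟨o, _, rfl⟩; exact (inv o).1.1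
        have hmem := RRSD.hnext_mem (g := g) hε ⟨hβa, hβb⟩ (hg β ⟨hβa, hβb⟩)
        exact ⟨le_trans hβa hx1, lt_of_lt_of_le hx2 hmem.2⟩
    · -- pairwise disjoint
      intro β hβ β' hβ' hne
      have hkey : ∀ γ ∈ (RRSD.phi g ε a b '' Set.Iic θ) \ {b},
          ∀ γ' ∈ (RRSD.phi g ε a b '' Set.Iic θ) \ {b}, γ < γ' →
          Disjoint (Set.Ico γ (RRSD.hnext g ε b γ)) (Set.Ico γ' (RRSD.hnext g ε b γ')) := by
        intro γ hγ γ' hγ' hlt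
        have hSle : RRSD.hnext g ε b γ ≤ γ' := hsucc γ hγ |>.2.2 γ' hγ'.1 hlt
        rw [Set.disjoint_left]
        rintro x ⟨_, hx2⟩ ⟨hx3, _⟩
        exact absurd (lt_of_lt_of_le hx2 (le_trans hSle hx3)) (lt_irrefl x)
      rcases hne.lt_or_gt with h | h
      · exact hkey β hβ β' hβ' h
      · exact (hkey β' hβ' β hβ h).symm
    · -- oscillation
      intro β hβ
      obtain ⟨hβΛ, hβne⟩ := hβ
      rw [Set.mem_singleton_iff] at hβne
      have hβb : β < b := lt_of_le_of_ne (by rcases hβΛ with ⟨o, _, rfl⟩; exact (inv o).1.2) hβne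
      have hβa : a ≤ β := by rcases hβΛ with ⟨o, _, rfl⟩; exact (inv o).1.1
      exact RRSD.hnext_osc hε ⟨hβa, hβb⟩ (hg β ⟨hβa, hβb⟩)
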